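/- Define f₄(p) = (p³ + 3p² + 16p + 14)/(2p⁴ + 8p³ + 40p² + 64p + 48). Then for every odd p ≥ 3, f₄(p-2) + f₄(p) - 1/p = -576/(p⁹ + 24p⁷ + 192p⁵ - 64p³ + 576p). -/

import Mathlib

theorem madhava_sthaulya_fourth (p : ℤ) (hp : 3 ≤ p) (hodd : Odd p) :
    (((p : ℝ) - 2) ^ 3 + 3 * ((p : ℝ) - 2) ^ 2 + 16 * ((p : ℝ) - 2) + 14)
        / (2 * ((p : ℝ) - 2) ^ 4 + 8 * ((p : ℝ) - 2) ^ 3 + 40 * ((p : ℝ) - 2) ^ 2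
            + 64 * ((p : ℝ) - 2) + 48)
      + ((p : ℝ) ^ 3 + 3 * (p : ℝ) ^ 2 + 16 * (p : ℝ) + 14)
        / (2 * (p : ℝ) ^ 4 + 8 * (p : ℝ) ^ 3 + 40 * (p : ℝ) ^ 2 + 64 * (p : ℝ) + 48)
      - 1 / (p : ℝ)
      = -576 / ((p : ℝ) ^ 9 + 24 * (p : ℝ) ^ 7 + 192 * (p : ℝ) ^ 5 - 64 * (p : ℝ) ^ 3
          + 576 * (p : ℝ)) := by
  have hp' : (3:ℝ) ≤ (p:ℝ) := by exact_mod_cast hp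
  have h1 : 2 * ((p : ℝ) - 2) ^ 4 + 8 * ((p : ℝ) - 2) ^ 3 + 40 * ((p : ℝ) - 2) ^ 2
      + 64 * ((p : ℝ) - 2) + 48 ≠ 0 := by nlinarith [sq_nonneg ((p:ℝ)-2), sq_nonneg (((p:ℝ)-2)^2)]
  have h2 : 2 * (p : ℝ) ^ 4 + 8 * (p : ℝ) ^ 3 + 40 * (p : ℝ) ^ 2 + 64 * (p : ℝ) + 48 ≠ 0 := by
    nlinarith [sq_nonneg ((p:ℝ)^2), sq_nonneg (p:ℝ)]
  have h3 : (p:ℝ) ≠ 0 := by linarith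
  have hq : (0:ℝ) < (p:ℝ) := by linarith
  have hinner : (0:ℝ) < (p:ℝ)^8 + 24*(p:ℝ)^6 + 192*(p:ℝ)^4 - 64*(p:ℝ)^2 + 576 := by
    nlinarith [sq_nonneg ((p:ℝ)^4), sq_nonneg ((p:ℝ)^3), sq_nonneg ((p:ℝ)^2 - 1),
      sq_nonneg (p:ℝ), sq_nonneg ((p:ℝ)^2)]
  have h4 : (p : ℝ) ^ 9 + 24 * (p : ℝ) ^ 7 + 192 * (p : ℝ) ^ 5 - 64 * (p : ℝ) ^ 3
      + 576 * (p : ℝ) ≠ 0 := by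
    have : (p : ℝ) ^ 9 + 24 * (p : ℝ) ^ 7 + 192 * (p : ℝ) ^ 5 - 64 * (p : ℝ) ^ 3
        + 576 * (p : ℝ) = (p:ℝ) * ((p:ℝ)^8 + 24*(p:ℝ)^6 + 192*(p:ℝ)^4 - 64*(p:ℝ)^2 + 576) := by ring
    rw [this]; positivity
  rw [div_add_div _ _ h1 h2, div_sub_div _ _ (mul_ne_zero h1 h2) h3,
    div_eq_div_iff (mul_ne_zero (mul_ne_zero h1 h2) h3) h4]
  ring
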